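/- Rapid decay of eigenvectors of the Bloch operator in discrete Fourier variables: let D = diag(d₁,…,dₙ) with dᵢ > 0, σ ∈ ℝ, λ ∈ ℂ, and let h : ℤ → M_n(ℂ) satisfy sup_{k∈ℤ} (1+|k|)^m ‖h_k‖ < ∞ for every m ∈ ℕ. Suppose w : ℤ → ℂⁿ is bounded and satisfies, for every ℓ ∈ ℤ, −(σ+ℓ)² D w_ℓ + Σ_{k∈ℤ} h_{ℓ−k} w_k = λ w_ℓ (the series converging absolutely). Then sup_{ℓ∈ℤ} (1+|ℓ|)^m |w_ℓ| < ∞ for every m ∈ ℕ; in particular w ∈ (ℓ^q(ℤ))ⁿ for every q ∈ [1,∞]. -/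

import Mathlib

open scoped ENNReal

private lemma aux_summable' : Summable fun j : ℤ => ((1 + |(j : ℝ)|) ^ 2)⁻¹ := by
  have hn : Summable fun n : ℕ => ((1 + (n : ℝ)) ^ 2)⁻¹ := by
    have h1 : Summable (fun n : ℕ => ((n : ℝ) ^ 2)⁻¹) :=
      Real.summable_nat_pow_inv.mpr one_lt_two
    have h2 := (summable_nat_add_iff 1).mpr h1
    exact h2.congr fun n => by push_cast; ring_nf
  refine Summable.of_nat_of_neg (hn.congr fun n => ?_) (hn.congr fun n => ?_) <;>
    simp [abs_of_nonneg, Nat.cast_nonneg]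

private lemma aux_one_add_abs' (a b : ℝ) : 1 + |a + b| ≤ (1 + |a|) * (1 + |b|) := by
  have := abs_add_le a b
  have := abs_nonneg a
  have := abs_nonneg b
  nlinarith

private lemma aux_coord' (n : ℕ) (x : EuclideanSpace ℂ (Fin n)) (i : Fin n) : ‖x i‖ ≤ ‖x‖ := by
  rw [EuclideanSpace.norm_eq]
  have h1 : ‖x i‖ ^ 2 ≤ ∑ j, ‖x j‖ ^ 2 :=
    Finset.single_le_sum (f := fun j => ‖x j‖ ^ 2) (fun j _ => by positivity) (Finset.mem_univ i)
  calc ‖x i‖ = Real.sqrt (‖x i‖ ^ 2) := (Real.sqrt_sq (norm_nonneg _)).symm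
    _ ≤ _ := Real.sqrt_le_sqrt h1

private lemma aux_norm_le' (n : ℕ) (x : EuclideanSpace ℂ (Fin n)) (B : ℝ) (hB : 0 ≤ B)
    (hx : ∀ i, ‖x i‖ ≤ B) : ‖x‖ ≤ Real.sqrt n * B := by
  rw [EuclideanSpace.norm_eq]
  have h : ∑ i, ‖x i‖ ^ 2 ≤ n * B ^ 2 := by
    calc ∑ i, ‖x i‖ ^ 2 ≤ ∑ _i : Fin n, B ^ 2 :=
          Finset.sum_le_sum fun i _ => by nlinarith [hx i, norm_nonneg (x i)]
      _ = n * B ^ 2 := by simp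
  calc Real.sqrt (∑ i, ‖x i‖ ^ 2) ≤ Real.sqrt (n * B ^ 2) := Real.sqrt_le_sqrt h
    _ = Real.sqrt n * B := by rw [Real.sqrt_mul (by positivity), Real.sqrt_sq hB]

private lemma aux_L' (a b s : ℝ) (ha : 0 < a) :
    ∃ L : ℕ, ∀ ℓ : ℤ, (L : ℝ) ≤ |(ℓ : ℝ)| → 1 + |(ℓ : ℝ)| + b ≤ a * (s + ℓ) ^ 2 := by
  obtain ⟨L, hL⟩ := exists_nat_ge (|s| + 1 + (2 + |s| + |b|) / a)
  refine ⟨L, fun ℓ hℓ => ?_⟩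
  set t := |(ℓ : ℝ)| with ht
  have htv : |s| + 1 + (2 + |s| + |b|) / a ≤ t := le_trans hL hℓ
  have hq : a * ((2 + |s| + |b|) / a) = 2 + |s| + |b| := by field_simp
  have hqnn : 0 ≤ (2 + |s| + |b|) / a := by positivity
  have h1 : t - |s| ≤ |s + (ℓ : ℝ)| := by
    have := abs_sub_abs_le_abs_sub (ℓ : ℝ) (-s)
    simp only [sub_neg_eq_add, abs_neg] at this
    calc t - |s| ≤ |(ℓ : ℝ) + s| := this
      _ = |s + (ℓ : ℝ)| := by rw [add_comm]
  have hvnn : 0 ≤ t - |s| := by nlinarith [abs_nonneg s]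
  have hsq : (t - |s|) ^ 2 ≤ (s + (ℓ : ℝ)) ^ 2 := by
    calc (t - |s|) ^ 2 ≤ |s + (ℓ : ℝ)| ^ 2 := pow_le_pow_left₀ hvnn h1 2
      _ = (s + (ℓ : ℝ)) ^ 2 := sq_abs _
  have hb : b ≤ |b| := le_abs_self b
  nlinarith [hsq, hq, hb, abs_nonneg s, abs_nonneg b, ha, hvnn, htv,
    mul_le_mul_of_nonneg_left htv (le_of_lt ha)]

theorem rapid_decay_bloch_eigenvectors
    (n : ℕ) (d : Fin n → ℝ) (hd : ∀ i, 0 < d i) (σ : ℝ) (lam : ℂ)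
    (h : ℤ → EuclideanSpace ℂ (Fin n) →L[ℂ] EuclideanSpace ℂ (Fin n))
    (hdecay : ∀ m : ℕ, ∃ C : ℝ, ∀ k : ℤ, (1 + |(k : ℝ)|) ^ m * ‖h k‖ ≤ C)
    (w : ℤ → EuclideanSpace ℂ (Fin n))
    (hbdd : ∃ M : ℝ, ∀ ℓ : ℤ, ‖w ℓ‖ ≤ M)
    (habs : ∀ ℓ : ℤ, Summable fun k : ℤ => ‖h (ℓ - k) (w k)‖)
    (heq : ∀ (ℓ : ℤ) (i : Fin n),
      -(((σ : ℂ) + (ℓ : ℂ)) ^ 2) * (d i : ℂ) * w ℓ i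
          + (∑' k : ℤ, h (ℓ - k) (w k)) i = lam * w ℓ i) :
    (∀ m : ℕ, ∃ C : ℝ, ∀ ℓ : ℤ, (1 + |(ℓ : ℝ)|) ^ m * ‖w ℓ‖ ≤ C) ∧
    (∀ qexp : ℝ≥0∞, 1 ≤ qexp → Memℓp w qexp) := by
  obtain ⟨M, hM⟩ := hbdd
  have key : ∀ m : ℕ, ∃ C : ℝ, 0 ≤ C ∧ ∀ ℓ : ℤ, (1 + |(ℓ : ℝ)|) ^ m * ‖w ℓ‖ ≤ C := by
    -- first handle n = 0
    rcases Nat.eq_zero_or_pos n with hn | hn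
    · subst hn
      intro m
      refine ⟨0, le_refl 0, fun ℓ => ?_⟩
      have : w ℓ = 0 := Subsingleton.elim _ _
      simp [this]
    -- n > 0
    have hne : Nonempty (Fin n) := Fin.pos_iff_nonempty.mp hn
    set dmin : ℝ := Finset.univ.inf' (Finset.univ_nonempty) d with hdmin
    have hdmin_pos : 0 < dmin := by
      rw [hdmin, Finset.lt_inf'_iff]
      exact fun i _ => hd i
    have hdmin_le : ∀ i, dmin ≤ d i := fun i => Finset.inf'_le _ (Finset.mem_univ i)
    obtain ⟨L, hL⟩ := aux_L' dmin ‖lam‖ σ hdmin_pos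
    intro m
    induction m with
    | zero =>
      refine ⟨max M 0, le_max_right _ _, fun ℓ => ?_⟩
      simp only [pow_zero, one_mul]
      exact le_trans (hM ℓ) (le_max_left _ _)
    | succ m ih =>
      obtain ⟨Cm, hCm0, hCm⟩ := ih
      obtain ⟨A, hA⟩ := hdecay (m + 2)
      have hA0 : 0 ≤ A := le_trans (by positivity) (hA 0)
      set B := ∑' j : ℤ, ((1 + |(j : ℝ)|) ^ 2)⁻¹ with hB
      have hB0 : 0 ≤ B := tsum_nonneg fun j => by positivity
      -- the convolution sum
      set S : ℤ → EuclideanSpace ℂ (Fin n) := fun ℓ => ∑' k : ℤ, h (ℓ - k) (w k) with hSdef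
      have hS : ∀ ℓ : ℤ, (1 + |(ℓ : ℝ)|) ^ m * ‖S ℓ‖ ≤ A * Cm * B := by
        intro ℓ
        have hpt : ∀ k : ℤ, (1 + |(ℓ : ℝ)|) ^ m * ‖h (ℓ - k) (w k)‖ ≤
            A * Cm * ((1 + |((ℓ - k : ℤ) : ℝ)|) ^ 2)⁻¹ := by
          intro k
          have hcast : ((ℓ - k : ℤ) : ℝ) = (ℓ : ℝ) - (k : ℝ) := by push_cast; ring
          set P : ℝ := 1 + |((ℓ - k : ℤ) : ℝ)| with hP
          set Q : ℝ := 1 + |(k : ℝ)| with hQ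
          have hP0 : (0 : ℝ) < P := by positivity
          have hsplit : 1 + |(ℓ : ℝ)| ≤ P * Q := by
            have := aux_one_add_abs' ((ℓ : ℝ) - (k : ℝ)) (k : ℝ)
            rw [sub_add_cancel] at this
            rw [hP, hQ, hcast]; exact this
          have hop : ‖h (ℓ - k) (w k)‖ ≤ ‖h (ℓ - k)‖ * ‖w k‖ :=
            (h (ℓ - k)).le_opNorm (w k)
          have hAk : P ^ (m + 2) * ‖h (ℓ - k)‖ ≤ A := hA (ℓ - k)
          have hwk : Q ^ m * ‖w k‖ ≤ Cm := hCm k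
          -- P^m ‖h‖ ≤ A * (P^2)⁻¹
          have hhk : P ^ m * ‖h (ℓ - k)‖ ≤ A * (P ^ 2)⁻¹ := by
            have hp2 : (0 : ℝ) < P ^ 2 := by positivity
            have hkey : P ^ m * ‖h (ℓ - k)‖ * P ^ 2 ≤ A := by
              calc P ^ m * ‖h (ℓ - k)‖ * P ^ 2 = P ^ (m + 2) * ‖h (ℓ - k)‖ := by ring
                _ ≤ A := hAk
            rw [mul_comm A, inv_mul_eq_div]
            exact (le_div_iff₀ hp2).mpr hkey
          calc (1 + |(ℓ : ℝ)|) ^ m * ‖h (ℓ - k) (w k)‖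
              ≤ (P * Q) ^ m * (‖h (ℓ - k)‖ * ‖w k‖) := by
                apply mul_le_mul (pow_le_pow_left₀ (by positivity) hsplit m) hop
                  (norm_nonneg _) (by positivity)
            _ = (P ^ m * ‖h (ℓ - k)‖) * (Q ^ m * ‖w k‖) := by rw [mul_pow]; ring
            _ ≤ (A * (P ^ 2)⁻¹) * Cm := by
                apply mul_le_mul hhk hwk (by positivity)
                  (by positivity)
            _ = A * Cm * (P ^ 2)⁻¹ := by ring
        have hsum_rhs : Summable fun k : ℤ => A * Cm * ((1 + |((ℓ - k : ℤ) : ℝ)|) ^ 2)⁻¹ := by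
          have := (aux_summable'.mul_left (A * Cm)).comp_injective
            (Equiv.subLeft ℓ).injective
          exact this.congr fun k => rfl
        have h1 : ‖S ℓ‖ ≤ ∑' k, ‖h (ℓ - k) (w k)‖ := norm_tsum_le_tsum_norm (habs ℓ)
        have h2 : (1 + |(ℓ : ℝ)|) ^ m * ‖S ℓ‖ ≤
            ∑' k, (1 + |(ℓ : ℝ)|) ^ m * ‖h (ℓ - k) (w k)‖ := by
          rw [tsum_mul_left]
          exact mul_le_mul_of_nonneg_left h1 (by positivity)
        have h3 : (∑' k, (1 + |(ℓ : ℝ)|) ^ m * ‖h (ℓ - k) (w k)‖) ≤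
            ∑' k, A * Cm * ((1 + |((ℓ - k : ℤ) : ℝ)|) ^ 2)⁻¹ :=
          Summable.tsum_le_tsum hpt ((habs ℓ).mul_left _) hsum_rhs
        have h4 : (∑' k : ℤ, A * Cm * ((1 + |((ℓ - k : ℤ) : ℝ)|) ^ 2)⁻¹) = A * Cm * B := by
          rw [tsum_mul_left, hB]
          congr 1
          exact (Equiv.subLeft ℓ).tsum_eq fun j => ((1 + |(j : ℝ)|) ^ 2)⁻¹
        linarith
      -- now the bootstrap bound
      refine ⟨max (Real.sqrt n * (A * Cm * B)) ((1 + (L : ℝ)) ^ (m + 1) * max M 0),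
        le_trans (by positivity) (le_max_left _ _), fun ℓ => ?_⟩
      rcases le_or_gt (L : ℝ) |(ℓ : ℝ)| with hℓ | hℓ
      · -- large ℓ
        have hpos : (0 : ℝ) < 1 + |(ℓ : ℝ)| := by positivity
        have hcomp : ∀ i, ‖w ℓ i‖ ≤ ‖S ℓ‖ / (1 + |(ℓ : ℝ)|) := by
          intro i
          set c : ℂ := lam + ((σ : ℂ) + (ℓ : ℂ)) ^ 2 * (d i : ℂ) with hc
          have hSi : S ℓ i = c * w ℓ i := by
            have := heq ℓ i
            rw [hSdef]
            linear_combination this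
          have hcre : c.re = lam.re + (σ + (ℓ : ℝ)) ^ 2 * d i := by
            have : ((σ : ℂ) + (ℓ : ℂ)) ^ 2 * (d i : ℂ) =
                (((σ + (ℓ : ℝ)) ^ 2 * d i : ℝ) : ℂ) := by push_cast; ring
            rw [hc, this]
            simp only [Complex.add_re, Complex.ofReal_re]
          have hre : lam.re ≥ -‖lam‖ := by
            have := Complex.abs_re_le_norm lam
            cases abs_le.mp this; linarith
          have hdl : dmin * (σ + (ℓ : ℝ)) ^ 2 ≤ (σ + (ℓ : ℝ)) ^ 2 * d i := by
            rw [mul_comm]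
            exact mul_le_mul_of_nonneg_left (hdmin_le i) (sq_nonneg _)
          have hcnorm : 1 + |(ℓ : ℝ)| ≤ ‖c‖ := by
            have h5 := hL ℓ hℓ
            have h6 : c.re ≤ ‖c‖ := Complex.re_le_norm c
            rw [hcre] at h6
            linarith
          have h7 : ‖S ℓ i‖ = ‖c‖ * ‖w ℓ i‖ := by rw [hSi, norm_mul]
          have h8 : ‖S ℓ i‖ ≤ ‖S ℓ‖ := aux_coord' n (S ℓ) i
          rw [le_div_iff₀ hpos]
          calc ‖w ℓ i‖ * (1 + |(ℓ : ℝ)|) ≤ ‖w ℓ i‖ * ‖c‖ := by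
                exact mul_le_mul_of_nonneg_left hcnorm (norm_nonneg _)
            _ = ‖S ℓ i‖ := by rw [h7]; ring
            _ ≤ ‖S ℓ‖ := h8
        have hwn : ‖w ℓ‖ ≤ Real.sqrt n * (‖S ℓ‖ / (1 + |(ℓ : ℝ)|)) :=
          aux_norm_le' n (w ℓ) _ (by positivity) hcomp
        have hfinal : (1 + |(ℓ : ℝ)|) ^ (m + 1) * ‖w ℓ‖ ≤ Real.sqrt n * (A * Cm * B) := by
          calc (1 + |(ℓ : ℝ)|) ^ (m + 1) * ‖w ℓ‖
              ≤ (1 + |(ℓ : ℝ)|) ^ (m + 1) * (Real.sqrt n * (‖S ℓ‖ / (1 + |(ℓ : ℝ)|))) :=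
                mul_le_mul_of_nonneg_left hwn (by positivity)
            _ = Real.sqrt n * ((1 + |(ℓ : ℝ)|) ^ m * ‖S ℓ‖) := by
                field_simp
                ring
            _ ≤ Real.sqrt n * (A * Cm * B) :=
                mul_le_mul_of_nonneg_left (hS ℓ) (Real.sqrt_nonneg _)
        exact le_trans hfinal (le_max_left _ _)
      · -- small ℓ
        have h9 : (1 + |(ℓ : ℝ)|) ^ (m + 1) ≤ (1 + (L : ℝ)) ^ (m + 1) :=
          pow_le_pow_left₀ (by positivity) (by linarith) _
        have h10 : ‖w ℓ‖ ≤ max M 0 := le_trans (hM ℓ) (le_max_left _ _)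
        calc (1 + |(ℓ : ℝ)|) ^ (m + 1) * ‖w ℓ‖ ≤ (1 + (L : ℝ)) ^ (m + 1) * max M 0 :=
              mul_le_mul h9 h10 (norm_nonneg _) (by positivity)
          _ ≤ _ := le_max_right _ _
  constructor
  · intro m
    obtain ⟨C, _, hC⟩ := key m
    exact ⟨C, hC⟩
  · intro q hq
    obtain ⟨C, hC0, hC⟩ := key 2
    have hsum : Summable fun ℓ : ℤ => ‖w ℓ‖ := by
      refine Summable.of_nonneg_of_le (fun ℓ => norm_nonneg _) (fun ℓ => ?_)
        (aux_summable'.mul_left C)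
      have hpos : (0 : ℝ) < (1 + |(ℓ : ℝ)|) ^ 2 := by positivity
      calc ‖w ℓ‖ = ((1 + |(ℓ : ℝ)|) ^ 2)⁻¹ * ((1 + |(ℓ : ℝ)|) ^ 2 * ‖w ℓ‖) := by
            field_simp
        _ ≤ ((1 + |(ℓ : ℝ)|) ^ 2)⁻¹ * C :=
            mul_le_mul_of_nonneg_left (hC ℓ) (by positivity)
        _ = C * ((1 + |(ℓ : ℝ)|) ^ 2)⁻¹ := mul_comm _ _
    have h1 : Memℓp w 1 := memℓp_gen (by simpa using hsum)
    exact h1.of_exponent_ge hq
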